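/- For the random walker at position k > 0 in the B-deletion protocol, the outcome probabilities are p₀(k) = (1 + λ^{2k+2}) / (1 + λ² + λ^{2k} + λ^{2k+2}) and p₁(k) = (λ² + λ^{2k}) / (1 + λ² + λ^{2k} + λ^{2k+2}); these satisfy p₀(k) + p₁(k) = 1, and for 0 < λ < 1 one has p₁(k) ≤ 2λ²/(1 + λ²) and p₀(k) > p₁(k) for all k ≥ 1. -/

import Mathlib

/-- Random-walker outcome probabilities in the B-deletion protocol: for λ ∈ (0,1) and
position k ≥ 1, p₀(k) = (1 + λ^{2k+2})/(1 + λ² + λ^{2k} + λ^{2k+2}) and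
p₁(k) = (λ² + λ^{2k})/(1 + λ² + λ^{2k} + λ^{2k+2}) satisfy p₀ + p₁ = 1,
p₁ ≤ 2λ²/(1 + λ²), and p₀ > p₁. -/
theorem walker_probabilities (lam : ℝ) (h0 : 0 < lam) (h1 : lam < 1)
    (k : ℕ) (hk : 1 ≤ k) :
    let p0 : ℝ :=
      (1 + lam ^ (2 * k + 2)) / (1 + lam ^ 2 + lam ^ (2 * k) + lam ^ (2 * k + 2))
    let p1 : ℝ :=
      (lam ^ 2 + lam ^ (2 * k)) / (1 + lam ^ 2 + lam ^ (2 * k) + lam ^ (2 * k + 2))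
    p0 + p1 = 1 ∧ p1 ≤ 2 * lam ^ 2 / (1 + lam ^ 2) ∧ p1 < p0 := by
  intro p0 p1
  have hp2 : (0:ℝ) < lam ^ 2 := by positivity
  have hp2k : (0:ℝ) < lam ^ (2 * k) := by positivity
  have hp2k2 : (0:ℝ) < lam ^ (2 * k + 2) := by positivity
  have hD : (0:ℝ) < 1 + lam ^ 2 + lam ^ (2 * k) + lam ^ (2 * k + 2) := by linarith
  have hle : lam ^ (2 * k) ≤ lam ^ 2 :=
    pow_le_pow_of_le_one h0.le h1.le (by omega)
  have hlt1 : lam ^ 2 < 1 := by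
    calc lam ^ 2 < 1 ^ 2 := by
          exact pow_lt_pow_left₀ h1 h0.le (by norm_num)
      _ = 1 := one_pow 2
  have hlt2 : lam ^ (2 * k) < 1 := by
    calc lam ^ (2 * k) ≤ lam ^ 2 := hle
      _ < 1 := hlt1
  refine ⟨?_, ?_, ?_⟩
  · show (1 + lam ^ (2 * k + 2)) / _ + (lam ^ 2 + lam ^ (2 * k)) / _ = 1
    rw [← add_div, div_eq_one_iff_eq hD.ne']
    ring
  · rw [div_le_div_iff₀ hD (by linarith)]
    nlinarith [mul_pos hp2 hp2k, mul_pos hp2 hp2k2, mul_pos hp2k hp2k2]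
  · show (lam ^ 2 + lam ^ (2 * k)) / _ < (1 + lam ^ (2 * k + 2)) / _
    rw [div_lt_div_iff₀ hD hD]
    have hsplit : lam ^ (2 * k + 2) = lam ^ (2 * k) * lam ^ 2 := by rw [pow_add]
    nlinarith [mul_pos (sub_pos.mpr hlt1) (sub_pos.mpr hlt2)]
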